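/- Let X be a finite nonempty set, let d, N ≥ 1 be integers and λ ≥ 1 a real, and let φ : X → ℝ^d satisfy ‖φ(x)‖₂ ≤ 1 for all x ∈ X. Let ν_1,…,ν_N be probability distributions on X and define, for 1 ≤ n ≤ N, M_n := λ·I_d + Σ_{i=1}^{n} Σ_{x∈X} ν_i(x)·φ(x)φ(x)ᵀ. Then Σ_{n=1}^{N} E_{x∼ν_n}[ ‖φ(x)‖_{M_n^{-1}} ] ≤ √( d·N·log( 1 + N/(d·λ) ) ). -/

import Mathlib

open Finset Matrix

/-- Euclidean (ℓ²) norm of a finite-dimensional real vector. -/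
noncomputable def l2norm {ι : Type*} [Fintype ι] (x : ι → ℝ) : ℝ :=
  Real.sqrt (∑ i, x i ^ 2)

/-- Matrix-weighted norm ‖x‖_M = √(xᵀ M x). -/
noncomputable def matNorm {ι : Type*} [Fintype ι] (M : Matrix ι ι ℝ) (x : ι → ℝ) : ℝ :=
  Real.sqrt (x ⬝ᵥ M.mulVec x)

theorem trace_eq_sum_eigs {d : ℕ} {A : Matrix (Fin d) (Fin d) ℝ} (hA : A.IsHermitian) :
    A.trace = ∑ i, hA.eigenvalues i := by
  simpa using hA.trace_eq_sum_eigenvalues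

theorem det_eq_prod_eigs {d : ℕ} {A : Matrix (Fin d) (Fin d) ℝ} (hA : A.IsHermitian) :
    A.det = ∏ i, hA.eigenvalues i := by
  simpa using hA.det_eq_prod_eigenvalues

open scoped MatrixOrder in
theorem logdet_ineq {d : ℕ} {A B : Matrix (Fin d) (Fin d) ℝ} (hA : A.PosDef) (hB : B.PosDef) :
    (d : ℝ) - (A⁻¹ * B).trace ≤ Real.log A.det - Real.log B.det := by
  set S := CFC.sqrt B with hSdef
  have hS : S.PosSemidef := (CFC.sqrt_nonneg B).posSemidef
  have hSS : S * S = B := CFC.sqrt_mul_sqrt_self B hB.posSemidef.nonneg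
  set D := S * A⁻¹ * S with hDdef
  have hDpsd : D.PosSemidef := by
    have := hA.inv.posSemidef.mul_mul_conjTranspose_same S
    rwa [hS.isHermitian] at this
  have hdetS : S.det * S.det = B.det := by rw [← Matrix.det_mul, hSS]
  have hdetD : D.det = B.det / A.det := by
    rw [hDdef, Matrix.det_mul, Matrix.det_mul, Matrix.det_nonsing_inv, Ring.inverse_eq_inv',
      div_eq_mul_inv, ← hdetS]
    ring
  have hdetDpos : 0 < D.det := hdetD ▸ div_pos hB.det_pos hA.det_pos
  have htr : (A⁻¹ * B).trace = D.trace := by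
    rw [← hSS, ← Matrix.mul_assoc, Matrix.trace_mul_cycle]
  set μ := hDpsd.isHermitian.eigenvalues with hμdef
  have hμpos : ∀ i, 0 < μ i := by
    intro i
    rcases lt_or_eq_of_le (hDpsd.eigenvalues_nonneg i) with h | h
    · exact h
    · exfalso
      have : D.det = 0 := by
        rw [det_eq_prod_eigs hDpsd.isHermitian]
        exact Finset.prod_eq_zero (Finset.mem_univ i) h.symm
      exact hdetDpos.ne' this
  have h1 : ∀ i : Fin d, 1 - μ i ≤ -Real.log (μ i) := fun i => by
    have := Real.log_le_sub_one_of_pos (hμpos i)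
    linarith
  have hsum : (d : ℝ) - D.trace ≤ -Real.log D.det := by
    rw [trace_eq_sum_eigs hDpsd.isHermitian, det_eq_prod_eigs hDpsd.isHermitian,
      Real.log_prod (fun i _ => (hμpos i).ne')]
    calc (d : ℝ) - ∑ i, μ i = ∑ i : Fin d, (1 - μ i) := by
          rw [Finset.sum_sub_distrib]; simp
      _ ≤ ∑ i, -Real.log (μ i) := Finset.sum_le_sum fun i _ => h1 i
      _ = -∑ i, Real.log (μ i) := by rw [Finset.sum_neg_distrib]
  rw [htr]
  calc (d:ℝ) - D.trace ≤ -Real.log D.det := hsum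
    _ = Real.log A.det - Real.log B.det := by
        rw [hdetD, Real.log_div hB.det_pos.ne' hA.det_pos.ne']; ring

theorem logdet_le {d : ℕ} {A : Matrix (Fin d) (Fin d) ℝ} (hA : A.PosDef) {c : ℝ}
    (hc : 0 < c) (htr : A.trace ≤ (d : ℝ) * c) :
    Real.log A.det ≤ (d : ℝ) * Real.log c := by
  set μ := hA.isHermitian.eigenvalues with hμdef
  have hμpos : ∀ i, 0 < μ i := hA.eigenvalues_pos
  have h1 : ∀ i : Fin d, Real.log (μ i) ≤ Real.log c + μ i / c - 1 := fun i => by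
    have h2 := Real.log_le_sub_one_of_pos (div_pos (hμpos i) hc)
    have h3 : Real.log (μ i / c) = Real.log (μ i) - Real.log c :=
      Real.log_div (hμpos i).ne' hc.ne'
    linarith
  have htr' : (∑ i, μ i) ≤ (d:ℝ) * c := by rwa [← trace_eq_sum_eigs hA.isHermitian]
  rw [det_eq_prod_eigs hA.isHermitian, Real.log_prod (fun i _ => (hμpos i).ne')]
  calc ∑ i, Real.log (μ i) ≤ ∑ i : Fin d, (Real.log c + μ i / c - 1) :=
        Finset.sum_le_sum fun i _ => h1 i
    _ = (d:ℝ) * Real.log c + (∑ i, μ i) / c - d := by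
        rw [Finset.sum_sub_distrib, Finset.sum_add_distrib, ← Finset.sum_div,
          Finset.sum_const, Finset.sum_const, Finset.card_univ, Fintype.card_fin,
          nsmul_eq_mul, nsmul_eq_mul, mul_one]
    _ ≤ (d:ℝ) * Real.log c := by
        have : (∑ i, μ i) / c ≤ d := by
          rw [div_le_iff₀ hc]; linarith
        linarith

lemma dot_vecMulVec {d : ℕ} (v x : Fin d → ℝ) :
    x ⬝ᵥ (vecMulVec v v) *ᵥ x = (v ⬝ᵥ x) ^ 2 := by
  have h : (vecMulVec v v) *ᵥ x = (v ⬝ᵥ x) • v := by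
    ext i
    simp only [mulVec, vecMulVec_apply, dotProduct, Pi.smul_apply, smul_eq_mul, Finset.sum_mul]
    exact Finset.sum_congr rfl fun j _ => by ring
  rw [h, dotProduct_smul, smul_eq_mul, dotProduct_comm, pow_two]

lemma psd_vecMulVec {d : ℕ} (v : Fin d → ℝ) : (vecMulVec v v).PosSemidef := by
  refine Matrix.PosSemidef.of_dotProduct_mulVec_nonneg ?_ ?_
  · ext i j
    simp [Matrix.conjTranspose_apply, vecMulVec_apply, mul_comm]
  · intro x
    rw [star_trivial, dot_vecMulVec]
    positivity

lemma psd_smul {d : ℕ} {M : Matrix (Fin d) (Fin d) ℝ} (hM : M.PosSemidef) {c : ℝ}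
    (hc : 0 ≤ c) : (c • M).PosSemidef := by
  refine Matrix.PosSemidef.of_dotProduct_mulVec_nonneg ?_ ?_
  · unfold Matrix.IsHermitian
    rw [Matrix.conjTranspose_smul, hM.1]
    simp
  · intro x
    rw [Matrix.smul_mulVec, dotProduct_smul, smul_eq_mul]
    exact mul_nonneg hc (hM.dotProduct_mulVec_nonneg x)

lemma psd_sum {d : ℕ} {ι : Type*} (s : Finset ι) (f : ι → Matrix (Fin d) (Fin d) ℝ)
    (hf : ∀ i ∈ s, (f i).PosSemidef) : (∑ i ∈ s, f i).PosSemidef := by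
  classical
  induction s using Finset.induction_on with
  | empty => simpa using Matrix.PosSemidef.zero
  | insert _ _ hns ih =>
    rw [Finset.sum_insert hns]
    exact (hf _ (Finset.mem_insert_self _ _)).add
      (ih fun i hi => hf i (Finset.mem_insert_of_mem hi))

lemma pd_smul_one {d : ℕ} {lam : ℝ} (hlam : 0 < lam) :
    (lam • (1 : Matrix (Fin d) (Fin d) ℝ)).PosDef := by
  have h : lam • (1 : Matrix (Fin d) (Fin d) ℝ) = Matrix.diagonal (fun _ => lam) := by
    ext i j
    by_cases h : i = j <;> simp [Matrix.one_apply, Matrix.diagonal_apply, h]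
  rw [h]
  exact Matrix.posDef_diagonal_iff.mpr fun _ => hlam

lemma trace_mul_vecMulVec {d : ℕ} (P : Matrix (Fin d) (Fin d) ℝ) (v : Fin d → ℝ) :
    (P * vecMulVec v v).trace = v ⬝ᵥ P *ᵥ v := by
  simp only [Matrix.trace, Matrix.diag, Matrix.mul_apply, vecMulVec_apply,
    dotProduct, mulVec, Finset.mul_sum]
  exact Finset.sum_congr rfl fun i _ => Finset.sum_congr rfl fun j _ => by ring

/-- Summed elliptical-potential bound for population covariances of a sequence of
distributions. -/
theorem summed_elliptical_potential
    {X : Type*} [Fintype X] [Nonempty X]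
    {d N : ℕ} (hd : 1 ≤ d) (hN : 1 ≤ N)
    {lam : ℝ} (hlam : 1 ≤ lam)
    (φ : X → Fin d → ℝ) (hφ : ∀ x, l2norm (φ x) ≤ 1)
    (ν : Fin N → X → ℝ) (hνpos : ∀ k x, 0 ≤ ν k x) (hνsum : ∀ k, ∑ x, ν k x = 1)
    (Mm : Fin N → Matrix (Fin d) (Fin d) ℝ)
    (hMm : ∀ k, Mm k = lam • (1 : Matrix (Fin d) (Fin d) ℝ) +
      ∑ i ∈ Finset.univ.filter (fun i => i ≤ k), ∑ x, ν i x • vecMulVec (φ x) (φ x)) :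
    (∑ k : Fin N, ∑ x, ν k x * matNorm (Mm k)⁻¹ (φ x)) ≤
      Real.sqrt (d * N * Real.log (1 + N / (d * lam))) := by
  classical
  have hd0 : (0:ℝ) < d := by exact_mod_cast hd
  have hN0 : (0:ℝ) < N := by exact_mod_cast hN
  have hlam0 : (0:ℝ) < lam := lt_of_lt_of_le one_pos hlam
  set V : Fin N → Matrix (Fin d) (Fin d) ℝ :=
    fun i => ∑ x, ν i x • vecMulVec (φ x) (φ x) with hVdef
  have hVpsd : ∀ i, (V i).PosSemidef := by
    intro i; simp only [hVdef]
    exact psd_sum _ _ fun x _ => psd_smul (psd_vecMulVec (φ x)) (hνpos i x)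
  set G : ℕ → Matrix (Fin d) (Fin d) ℝ :=
    fun n => lam • (1 : Matrix (Fin d) (Fin d) ℝ) +
      ∑ i ∈ Finset.univ.filter (fun i : Fin N => (i:ℕ) < n), V i with hGdef
  have hGpd : ∀ n, (G n).PosDef := by
    intro n; simp only [hGdef]
    exact (pd_smul_one hlam0).add_posSemidef (psd_sum _ _ fun i _ => hVpsd i)
  have hMmG : ∀ k : Fin N, Mm k = G ((k:ℕ) + 1) := by
    intro k
    rw [hMm k]
    simp only [hGdef, hVdef]
    congr 1
    apply Finset.sum_congr _ (fun _ _ => rfl)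
    apply Finset.filter_congr
    intro i _
    rw [Fin.le_def]
    omega
  have hMpd : ∀ k : Fin N, (Mm k).PosDef := fun k => (hMmG k) ▸ hGpd ((k:ℕ)+1)
  have hGsucc : ∀ k : Fin N, G ((k:ℕ) + 1) = G (k : ℕ) + V k := by
    intro k
    simp only [hGdef]
    have hsplit : (Finset.univ.filter (fun i : Fin N => (i:ℕ) < (k:ℕ) + 1))
        = insert k (Finset.univ.filter (fun i : Fin N => (i:ℕ) < (k:ℕ))) := by
      ext i
      simp [Nat.lt_succ_iff_lt_or_eq, Fin.ext_iff, or_comm]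
      rw [Fin.le_iff_val_le_val, Fin.lt_iff_val_lt_val]; omega
    rw [hsplit, Finset.sum_insert (by simp)]
    abel
  -- quadratic forms nonneg
  have hq : ∀ (k : Fin N) (x : X), 0 ≤ φ x ⬝ᵥ (Mm k)⁻¹ *ᵥ φ x := by
    intro k x
    have := (hMpd k).inv.posSemidef.dotProduct_mulVec_nonneg (φ x)
    rwa [star_trivial] at this
  -- per-step trace identity
  have hstep : ∀ k : Fin N, (∑ x, ν k x * (φ x ⬝ᵥ (Mm k)⁻¹ *ᵥ φ x)) =
      ((Mm k)⁻¹ * V k).trace := by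
    intro k
    simp only [hVdef]
    rw [Finset.mul_sum, Matrix.trace_sum]
    apply Finset.sum_congr rfl
    intro x _
    rw [Matrix.mul_smul, Matrix.trace_smul, trace_mul_vecMulVec, smul_eq_mul]
  -- potential step bound
  have hpot : ∀ k : Fin N, ((Mm k)⁻¹ * V k).trace ≤
      Real.log (G ((k:ℕ)+1)).det - Real.log (G (k:ℕ)).det := by
    intro k
    have hA := hGpd ((k:ℕ)+1)
    have hB := hGpd (k:ℕ)
    have hVk : V k = G ((k:ℕ)+1) - G (k:ℕ) := by rw [hGsucc k]; abel
    have hAdet : IsUnit (G ((k:ℕ)+1)).det := isUnit_iff_ne_zero.mpr hA.det_pos.ne'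
    calc ((Mm k)⁻¹ * V k).trace
        = (d:ℝ) - ((G ((k:ℕ)+1))⁻¹ * G (k:ℕ)).trace := by
          rw [hVk, hMmG k, Matrix.mul_sub, Matrix.trace_sub,
            Matrix.nonsing_inv_mul _ hAdet, Matrix.trace_one]
          simp
      _ ≤ _ := logdet_ineq hA hB
  -- summed trace bound via telescoping
  have hT : (∑ k : Fin N, ∑ x, ν k x * (φ x ⬝ᵥ (Mm k)⁻¹ *ᵥ φ x)) ≤
      Real.log (G N).det - Real.log (G 0).det := by
    calc (∑ k : Fin N, ∑ x, ν k x * (φ x ⬝ᵥ (Mm k)⁻¹ *ᵥ φ x))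
        = ∑ k : Fin N, ((Mm k)⁻¹ * V k).trace := Finset.sum_congr rfl fun k _ => hstep k
      _ ≤ ∑ k : Fin N, (Real.log (G ((k:ℕ)+1)).det - Real.log (G (k:ℕ)).det) :=
          Finset.sum_le_sum fun k _ => hpot k
      _ = ∑ n ∈ Finset.range N, (Real.log (G (n+1)).det - Real.log (G n).det) :=
          Fin.sum_univ_eq_sum_range (fun n => Real.log (G (n+1)).det - Real.log (G n).det) N
      _ = Real.log (G N).det - Real.log (G 0).det :=
          Finset.sum_range_sub (fun n => Real.log (G n).det) N
  -- trace bound on G N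
  have hsq : ∀ x : X, (∑ j, (φ x j)^2) ≤ 1 := by
    intro x
    have hs : 0 ≤ ∑ j, (φ x j)^2 := Finset.sum_nonneg fun j _ => sq_nonneg _
    have h1 := hφ x
    unfold l2norm at h1
    nlinarith [Real.sq_sqrt hs, Real.sqrt_nonneg (∑ j, (φ x j)^2)]
  have htrV : ∀ i : Fin N, (V i).trace ≤ 1 := by
    intro i
    simp only [hVdef]
    rw [Matrix.trace_sum]
    have heach : ∀ x : X, (ν i x • vecMulVec (φ x) (φ x)).trace = ν i x * ∑ j, (φ x j)^2 := by
      intro x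
      rw [Matrix.trace_smul, smul_eq_mul]
      congr 1
      simp [Matrix.trace, Matrix.diag, vecMulVec_apply, pow_two]
    calc (∑ x, (ν i x • vecMulVec (φ x) (φ x)).trace)
        = ∑ x, ν i x * ∑ j, (φ x j)^2 := Finset.sum_congr rfl fun x _ => heach x
      _ ≤ ∑ x, ν i x * 1 := Finset.sum_le_sum fun x _ =>
          mul_le_mul_of_nonneg_left (hsq x) (hνpos i x)
      _ = 1 := by simp [hνsum i]
  have htrG : (G N).trace ≤ (d:ℝ) * lam + N := by
    simp only [hGdef]
    rw [Matrix.trace_add, Matrix.trace_sum, Matrix.trace_smul, Matrix.trace_one]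
    have hfilt : (Finset.univ.filter (fun i : Fin N => (i:ℕ) < N)) = Finset.univ := by
      apply Finset.filter_true_of_mem
      intro i _
      exact i.isLt
    rw [hfilt]
    have : (∑ i : Fin N, (V i).trace) ≤ (N : ℝ) := by
      calc (∑ i : Fin N, (V i).trace) ≤ ∑ _i : Fin N, (1:ℝ) :=
            Finset.sum_le_sum fun i _ => htrV i
        _ = N := by simp
    simp only [smul_eq_mul, Fintype.card_fin]
    linarith
  -- log-det bound
  have hlogdet : Real.log (G N).det - Real.log (G 0).det ≤
      (d:ℝ) * Real.log (1 + N / (d * lam)) := by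
    have hG0 : (G 0).det = lam ^ d := by
      have h0 : G 0 = lam • (1 : Matrix (Fin d) (Fin d) ℝ) := by
        simp [hGdef]
      rw [h0, Matrix.det_smul, Matrix.det_one, mul_one, Fintype.card_fin]
    have hc : (0:ℝ) < lam + N / d := by positivity
    have h1 : Real.log (G N).det ≤ (d:ℝ) * Real.log (lam + N / d) := by
      apply logdet_le (hGpd N) hc
      calc (G N).trace ≤ (d:ℝ) * lam + N := htrG
        _ = (d:ℝ) * (lam + N / d) := by field_simp
    have h2 : Real.log (lam + N / d) - Real.log lam = Real.log (1 + N / (d * lam)) := by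
      rw [← Real.log_div hc.ne' hlam0.ne']
      congr 1
      field_simp
    have h3 : Real.log (G 0).det = (d:ℝ) * Real.log lam := by
      rw [hG0, Real.log_pow]
    rw [h3]
    nlinarith [h1, h2]
  have hTfinal : (∑ k : Fin N, ∑ x, ν k x * (φ x ⬝ᵥ (Mm k)⁻¹ *ᵥ φ x)) ≤
      (d:ℝ) * Real.log (1 + N / (d * lam)) := hT.trans hlogdet
  -- Cauchy–Schwarz
  set L := ∑ k : Fin N, ∑ x, ν k x * matNorm (Mm k)⁻¹ (φ x) with hLdef
  have hLnonneg : 0 ≤ L := by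
    apply Finset.sum_nonneg
    intro k _
    apply Finset.sum_nonneg
    intro x _
    exact mul_nonneg (hνpos k x) (Real.sqrt_nonneg _)
  have hCS : L^2 ≤ (N:ℝ) * (∑ k : Fin N, ∑ x, ν k x * (φ x ⬝ᵥ (Mm k)⁻¹ *ᵥ φ x)) := by
    have hcs := Finset.sum_mul_sq_le_sq_mul_sq Finset.univ
      (fun p : Fin N × X => Real.sqrt (ν p.1 p.2))
      (fun p : Fin N × X => Real.sqrt (ν p.1 p.2) * matNorm (Mm p.1)⁻¹ (φ p.2))
    have e1 : (∑ p : Fin N × X, Real.sqrt (ν p.1 p.2) *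
        (Real.sqrt (ν p.1 p.2) * matNorm (Mm p.1)⁻¹ (φ p.2))) = L := by
      rw [hLdef, Fintype.sum_prod_type]
      apply Finset.sum_congr rfl; intro k _
      apply Finset.sum_congr rfl; intro x _
      rw [← mul_assoc, Real.mul_self_sqrt (hνpos k x)]
    have e2 : (∑ p : Fin N × X, Real.sqrt (ν p.1 p.2) ^ 2) = (N:ℝ) := by
      rw [Fintype.sum_prod_type]
      calc (∑ k : Fin N, ∑ x, Real.sqrt (ν k x) ^ 2)
          = ∑ k : Fin N, ∑ x, ν k x := by
            apply Finset.sum_congr rfl; intro k _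
            apply Finset.sum_congr rfl; intro x _
            exact Real.sq_sqrt (hνpos k x)
        _ = ∑ _k : Fin N, (1:ℝ) := Finset.sum_congr rfl fun k _ => hνsum k
        _ = N := by simp
    have e3 : (∑ p : Fin N × X, (Real.sqrt (ν p.1 p.2) * matNorm (Mm p.1)⁻¹ (φ p.2)) ^ 2)
        = ∑ k : Fin N, ∑ x, ν k x * (φ x ⬝ᵥ (Mm k)⁻¹ *ᵥ φ x) := by
      rw [Fintype.sum_prod_type]
      apply Finset.sum_congr rfl; intro k _
      apply Finset.sum_congr rfl; intro x _
      rw [mul_pow, Real.sq_sqrt (hνpos k x)]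
      congr 1
      unfold matNorm
      exact Real.sq_sqrt (hq k x)
    rw [e1, e2, e3] at hcs
    exact hcs
  have hL2 : L^2 ≤ (d:ℝ) * N * Real.log (1 + N / (d * lam)) := by
    calc L^2 ≤ (N:ℝ) * (∑ k : Fin N, ∑ x, ν k x * (φ x ⬝ᵥ (Mm k)⁻¹ *ᵥ φ x)) := hCS
      _ ≤ (N:ℝ) * ((d:ℝ) * Real.log (1 + N / (d * lam))) :=
          mul_le_mul_of_nonneg_left hTfinal hN0.le
      _ = (d:ℝ) * N * Real.log (1 + N / (d * lam)) := by ring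
  calc L = Real.sqrt (L^2) := (Real.sqrt_sq hLnonneg).symm
    _ ≤ Real.sqrt ((d:ℝ) * N * Real.log (1 + N / (d * lam))) := Real.sqrt_le_sqrt hL2
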